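/- Let w be a finite word over {0,1,2} and let i, j, k be such that {i,j,k} = {0,1,2}. Writing wi for the word w with the letter i appended, the weights satisfy: b_i^(wi) = 9 b_i^(w) / (13 b_i^(w) + b_j^(w) + b_k^(w)), b_j^(wi) = (2 b_i^(w) + 2 b_j^(w) - b_k^(w)) / (13 b_i^(w) + b_j^(w) + b_k^(w)), and b_k^(wi) = (2 b_i^(w) - b_j^(w) + 2 b_k^(w)) / (13 b_i^(w) + b_j^(w) + b_k^(w)); in particular the denominators 13 b_i^(w) + b_j^(w) + b_k^(w) = 1 + 12 b_i^(w) are nonzero. -/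

import Mathlib

open Matrix BigOperators

/-- The matrix `M_0`. -/
noncomputable def M0 : Matrix (Fin 3) (Fin 3) ℝ :=
  (1 / 15 : ℝ) • !![9, 0, 0; 2, 2, -1; 2, -1, 2]

/-- The matrix `M_1`. -/
noncomputable def M1 : Matrix (Fin 3) (Fin 3) ℝ :=
  (1 / 15 : ℝ) • !![2, 2, -1; 0, 9, 0; -1, 2, 2]

/-- The matrix `M_2`. -/
noncomputable def M2 : Matrix (Fin 3) (Fin 3) ℝ :=
  (1 / 15 : ℝ) • !![2, -1, 2; -1, 2, 2; 0, 0, 9]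

/-- `Mmat i` is the matrix `M_i`. -/
noncomputable def Mmat : Fin 3 → Matrix (Fin 3) (Fin 3) ℝ := ![M0, M1, M2]

/-- For a word `w = [w₁, ..., wₘ]`, `Mword w = M_{w₁} * ⋯ * M_{wₘ}`
(the empty word giving the identity matrix). -/
noncomputable def Mword (w : List (Fin 3)) : Matrix (Fin 3) (Fin 3) ℝ :=
  (w.map Mmat).prod

/-- The `j`-th column `z_j` of `M_w`, as a vector in `ℝ³`. -/
noncomputable def zcol (w : List (Fin 3)) (j : Fin 3) : Fin 3 → ℝ :=
  fun i => Mword w i j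

/-- The vector `z = z₀ + z₁ + z₂`, the sum of the columns of `M_w`. -/
noncomputable def zvec (w : List (Fin 3)) : Fin 3 → ℝ :=
  fun i => ∑ j : Fin 3, Mword w i j

/-- `c_j^(w)`, the `j`-th column sum of `M_w`, i.e. the `j`-th entry of `(1,1,1) M_w`. -/
noncomputable def cw (w : List (Fin 3)) (j : Fin 3) : ℝ :=
  ∑ i : Fin 3, Mword w i j

/-- `S^(w) = c₀^(w) + c₁^(w) + c₂^(w)`, the sum of all entries of `M_w`. -/
noncomputable def Sw (w : List (Fin 3)) : ℝ :=
  ∑ j : Fin 3, cw w j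

/-- The weight `b_j^(w) = 1/6 + c_j^(w) / (2 S^(w))`. -/
noncomputable def bwt (w : List (Fin 3)) (j : Fin 3) : ℝ :=
  1 / 6 + cw w j / (2 * Sw w)

noncomputable def Amat : Fin 3 → Matrix (Fin 3) (Fin 3) ℝ :=
  ![(1/5 : ℝ) • !![5,0,0; 2,2,1; 2,1,2],
    (1/5 : ℝ) • !![2,2,1; 0,5,0; 1,2,2],
    (1/5 : ℝ) • !![2,1,2; 1,2,2; 0,0,5]]

noncomputable def Xmat : Fin 3 → Matrix (Fin 3) (Fin 3) ℝ :=
  ![!![1,-1/2,-1/2; -1/2,0,1/2; -1/2,1/2,0],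
    !![0,-1/2,1/2; -1/2,1,-1/2; 1/2,-1/2,0],
    !![0,1/2,-1/2; 1/2,0,-1/2; -1/2,-1/2,1]]

noncomputable def inn (P Q : Matrix (Fin 3) (Fin 3) ℝ) : ℝ :=
  ∑ p : Fin 3, ∑ q : Fin 3, P p q * Q p q

lemma mword_append (w : List (Fin 3)) (i : Fin 3) :
    Mword (w ++ [i]) = Mword w * Mmat i := by
  simp [Mword, List.prod_append]

lemma cw_append (w : List (Fin 3)) (i b : Fin 3) :
    cw (w ++ [i]) b = ∑ a : Fin 3, cw w a * Mmat i a b := by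
  simp only [cw, mword_append, Matrix.mul_apply, Finset.sum_mul]
  exact Finset.sum_comm

set_option maxHeartbeats 3000000 in
lemma inter (i b : Fin 3) (C : Matrix (Fin 3) (Fin 3) ℝ) :
    ∑ a : Fin 3, inn (C * Cᵀ) (Xmat a) * Mmat i a b
      = (5/3) * inn ((Amat i * C) * (Amat i * C)ᵀ) (Xmat b) := by
  fin_cases i <;> fin_cases b <;>
  · simp only [inn, Fin.sum_univ_three, Matrix.mul_apply, Matrix.transpose_apply]
    simp [Mmat, M0, M1, M2, Amat, Xmat, Matrix.smul_apply, smul_eq_mul,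
      Matrix.vecHead, Matrix.vecTail]
    ring

lemma detA (i : Fin 3) : (Amat i).det ≠ 0 := by
  fin_cases i <;>
  · simp [Amat, Matrix.det_fin_three, Matrix.smul_apply, smul_eq_mul,
      Matrix.vecHead, Matrix.vecTail]
    norm_num

lemma key (w : List (Fin 3)) :
    ∃ C : Matrix (Fin 3) (Fin 3) ℝ, C.det ≠ 0 ∧
      ∀ b, cw w b = (5/3 : ℝ) ^ w.length * inn (C * Cᵀ) (Xmat b) := by
  induction w using List.reverseRecOn with
  | nil =>
      refine ⟨1, by simp, ?_⟩
      intro b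
      have h1 : ((1 : Matrix (Fin 3) (Fin 3) ℝ) * (1 : Matrix (Fin 3) (Fin 3) ℝ)ᵀ)
          = 1 := by simp
      rw [h1]
      fin_cases b <;>
        simp [cw, Mword, inn, Xmat, Matrix.one_apply, Fin.sum_univ_three,
          Matrix.vecHead, Matrix.vecTail]
  | append_singleton w i ih =>
      obtain ⟨C, hdet, hc⟩ := ih
      refine ⟨Amat i * C, by simp [Matrix.det_mul]; exact ⟨fun h => (detA i h).elim,
        fun h => (hdet h).elim⟩, ?_⟩
      intro b
      rw [cw_append]
      have h1 : ∀ a ∈ Finset.univ, cw w a * Mmat i a b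
          = (5/3 : ℝ) ^ w.length * (inn (C * Cᵀ) (Xmat a) * Mmat i a b) := by
        intro a _; rw [hc a]; ring
      rw [Finset.sum_congr rfl h1, ← Finset.mul_sum, inter i b C]
      rw [List.length_append]
      simp [pow_succ]
      ring

lemma pos_aux (a b c d e f g h i : ℝ)
    (hdet : a*(e*i - f*h) - b*(d*i - f*g) + c*(d*h - e*g) ≠ 0) :
    0 < (1/2) * (((a-d)^2+(b-e)^2+(c-f)^2) + ((a-g)^2+(b-h)^2+(c-i)^2)
      + ((d-g)^2+(e-h)^2+(f-i)^2)) := by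
  rcases lt_or_ge 0 ((((a-d)^2+(b-e)^2+(c-f)^2) + ((a-g)^2+(b-h)^2+(c-i)^2)
      + ((d-g)^2+(e-h)^2+(f-i)^2))) with hlt | hle
  · linarith
  · exfalso
    have sq : ∀ x y : ℝ, (x - y)^2 = 0 → y = x := by
      intro x y hxy
      have := pow_eq_zero_iff (n := 2) (by norm_num) |>.mp hxy
      linarith
    have k1 : (a-d)^2 = 0 := le_antisymm (by nlinarith [sq_nonneg (a-d), sq_nonneg (b-e), sq_nonneg (c-f), sq_nonneg (a-g), sq_nonneg (b-h), sq_nonneg (c-i), sq_nonneg (d-g), sq_nonneg (e-h), sq_nonneg (f-i)]) (sq_nonneg _)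
    have k2 : (b-e)^2 = 0 := le_antisymm (by nlinarith [sq_nonneg (a-d), sq_nonneg (b-e), sq_nonneg (c-f), sq_nonneg (a-g), sq_nonneg (b-h), sq_nonneg (c-i), sq_nonneg (d-g), sq_nonneg (e-h), sq_nonneg (f-i)]) (sq_nonneg _)
    have k3 : (c-f)^2 = 0 := le_antisymm (by nlinarith [sq_nonneg (a-d), sq_nonneg (b-e), sq_nonneg (c-f), sq_nonneg (a-g), sq_nonneg (b-h), sq_nonneg (c-i), sq_nonneg (d-g), sq_nonneg (e-h), sq_nonneg (f-i)]) (sq_nonneg _)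
    have k4 : (a-g)^2 = 0 := le_antisymm (by nlinarith [sq_nonneg (a-d), sq_nonneg (b-e), sq_nonneg (c-f), sq_nonneg (a-g), sq_nonneg (b-h), sq_nonneg (c-i), sq_nonneg (d-g), sq_nonneg (e-h), sq_nonneg (f-i)]) (sq_nonneg _)
    have k5 : (b-h)^2 = 0 := le_antisymm (by nlinarith [sq_nonneg (a-d), sq_nonneg (b-e), sq_nonneg (c-f), sq_nonneg (a-g), sq_nonneg (b-h), sq_nonneg (c-i), sq_nonneg (d-g), sq_nonneg (e-h), sq_nonneg (f-i)]) (sq_nonneg _)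
    have k6 : (c-i)^2 = 0 := le_antisymm (by nlinarith [sq_nonneg (a-d), sq_nonneg (b-e), sq_nonneg (c-f), sq_nonneg (a-g), sq_nonneg (b-h), sq_nonneg (c-i), sq_nonneg (d-g), sq_nonneg (e-h), sq_nonneg (f-i)]) (sq_nonneg _)
    apply hdet
    rw [sq _ _ k1, sq _ _ k2, sq _ _ k3, sq _ _ k4, sq _ _ k5, sq _ _ k6]
    ring

lemma Spos (w : List (Fin 3)) : 0 < Sw w := by
  obtain ⟨C, hdet, hc⟩ := key w
  have hS : Sw w = (5/3 : ℝ) ^ w.length *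
      (inn (C * Cᵀ) (Xmat 0) + inn (C * Cᵀ) (Xmat 1) + inn (C * Cᵀ) (Xmat 2)) := by
    simp only [Sw, Fin.sum_univ_three, hc]; ring
  have hq : inn (C * Cᵀ) (Xmat 0) + inn (C * Cᵀ) (Xmat 1) + inn (C * Cᵀ) (Xmat 2)
      = (1/2) * (((C 0 0 - C 1 0)^2 + (C 0 1 - C 1 1)^2 + (C 0 2 - C 1 2)^2)
        + ((C 0 0 - C 2 0)^2 + (C 0 1 - C 2 1)^2 + (C 0 2 - C 2 2)^2)
        + ((C 1 0 - C 2 0)^2 + (C 1 1 - C 2 1)^2 + (C 1 2 - C 2 2)^2)) := by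
    simp only [inn, Fin.sum_univ_three, Matrix.mul_apply, Matrix.transpose_apply]
    simp [Xmat, Matrix.vecHead, Matrix.vecTail]
    ring
  have hdet3 : C 0 0 * (C 1 1 * C 2 2 - C 1 2 * C 2 1)
      - C 0 1 * (C 1 0 * C 2 2 - C 1 2 * C 2 0)
      + C 0 2 * (C 1 0 * C 2 1 - C 1 1 * C 2 0) ≠ 0 := by
    intro h0
    exact hdet (by rw [Matrix.det_fin_three]; linear_combination h0)
  have hpos := pos_aux (C 0 0) (C 0 1) (C 0 2) (C 1 0) (C 1 1) (C 1 2)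
    (C 2 0) (C 2 1) (C 2 2) hdet3
  rw [hS, hq]
  have h53 : (0:ℝ) < (5/3 : ℝ) ^ w.length := by positivity
  exact mul_pos h53 hpos

lemma Sw_eq (w : List (Fin 3)) (i j k : Fin 3) (hij : i ≠ j) (hik : i ≠ k) (hjk : j ≠ k) :
    Sw w = cw w i + cw w j + cw w k := by
  fin_cases i <;> fin_cases j <;> fin_cases k <;>
    first
      | exact absurd rfl hij
      | exact absurd rfl hik
      | exact absurd rfl hjk
      | (simp [Sw, Fin.sum_univ_three]; try ring)

lemma cw_step (w : List (Fin 3)) (i j k : Fin 3) (hij : i ≠ j) (hik : i ≠ k) (hjk : j ≠ k) :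
    cw (w ++ [i]) i = (9 * cw w i + 2 * cw w j + 2 * cw w k) / 15 ∧
    cw (w ++ [i]) j = (2 * cw w j - cw w k) / 15 ∧
    cw (w ++ [i]) k = (2 * cw w k - cw w j) / 15 := by
  refine ⟨?_, ?_, ?_⟩ <;> rw [cw_append] <;>
    fin_cases i <;> fin_cases j <;> fin_cases k <;>
    first
      | exact absurd rfl hij
      | exact absurd rfl hik
      | exact absurd rfl hjk
      | (simp [Fin.sum_univ_three, Mmat, M0, M1, M2, Matrix.smul_apply, smul_eq_mul,
          Matrix.vecHead, Matrix.vecTail]; try ring)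

set_option maxHeartbeats 1000000 in
/-- For a word `w` and `{i,j,k} = {0,1,2}`, writing `wi` for `w` with the letter `i`
appended, the weights satisfy the recursive formulas of Theorem 6.2; in particular
the denominator `13 b_i^(w) + b_j^(w) + b_k^(w) = 1 + 12 b_i^(w)` is nonzero. -/
theorem stmt_12 (w : List (Fin 3)) (i j k : Fin 3)
    (hijk : ({i, j, k} : Finset (Fin 3)) = Finset.univ) :
    13 * bwt w i + bwt w j + bwt w k = 1 + 12 * bwt w i ∧
    13 * bwt w i + bwt w j + bwt w k ≠ 0 ∧
    bwt (w ++ [i]) i = 9 * bwt w i / (13 * bwt w i + bwt w j + bwt w k) ∧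
    bwt (w ++ [i]) j =
      (2 * bwt w i + 2 * bwt w j - bwt w k) / (13 * bwt w i + bwt w j + bwt w k) ∧
    bwt (w ++ [i]) k =
      (2 * bwt w i - bwt w j + 2 * bwt w k) / (13 * bwt w i + bwt w j + bwt w k) := by
  have hd : i ≠ j ∧ i ≠ k ∧ j ≠ k := by
    fin_cases i <;> fin_cases j <;> fin_cases k <;> revert hijk <;> decide
  obtain ⟨hij, hik, hjk⟩ := hd
  obtain ⟨h1, h2, h3⟩ := cw_step w i j k hij hik hjk
  have hSw : Sw w = cw w i + cw w j + cw w k := Sw_eq w i j k hij hik hjk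
  have hSw' : Sw (w ++ [i]) = cw (w ++ [i]) i + cw (w ++ [i]) j + cw (w ++ [i]) k :=
    Sw_eq (w ++ [i]) i j k hij hik hjk
  have hp : (0:ℝ) < cw w i + cw w j + cw w k := hSw ▸ Spos w
  have hp2 : (0:ℝ) < 3 * cw w i + cw w j + cw w k := by
    have h4 := Spos (w ++ [i])
    rw [hSw', h1, h2, h3] at h4
    linarith
  set x := cw w i with hx
  set y := cw w j with hy
  set z := cw w k with hz
  have hne1 : x + y + z ≠ 0 := ne_of_gt hp
  have hne2 : 3 * x + y + z ≠ 0 := ne_of_gt hp2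
  simp only [bwt, hSw, hSw', h1, h2, h3]
  rw [show (9*x+2*y+2*z)/15 + (2*y-z)/15 + (2*z-y)/15 = (3*x+y+z)/5 from by ring]
  have hden : 13 * (1/6 + x / (2 * (x + y + z))) + (1/6 + y / (2 * (x + y + z)))
      + (1/6 + z / (2 * (x + y + z))) = 3 * (3 * x + y + z) / (x + y + z) := by
    field_simp
    ring
  refine ⟨?_, ?_, ?_, ?_, ?_⟩
  · field_simp
    ring
  · rw [hden]
    exact ne_of_gt (div_pos (by linarith) hp)
  · rw [hden]
    rw [← hx]
    have hne3 : x * 3 + y + z ≠ 0 := by linarith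
    field_simp [hne1, hne2, hne3]
    ring
  · rw [hden]
    field_simp [hne1, hne2]
    ring
  · rw [hden]
    field_simp [hne1, hne2]
    ring
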